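/- arXiv:2102.02089 — 2 statements merged into one kernel-verified Lean document; each statement's English description precedes it below -/
import Mathlib

section
/- Let R be a commutative ring, let p, q ∈ R, and let a : ℕ → R be a sequence whose generating function satisfies (p·z² − q·z + 1) · Σ_{n≥0} a_n zⁿ = 1 in the formal power series ring R[[z]]. Then for every n ≥ 0, a_n = Σ_{j=0}^{⌊n/2⌋} (−1)^j · C(n−j, j) · q^{n−2j} · p^{j}, where C(m, k) denotes the binomial coefficient. -/
lemma Skey {R : Type*} [CommRing R] (p q : R) (n : ℕ) :
    (∑ j ∈ Finset.range ((n+2)/2+1),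
        (-1 : R) ^ j * (Nat.choose (n+2-j) j : R) * q ^ (n+2 - 2*j) * p ^ j)
    = q * (∑ j ∈ Finset.range ((n+1)/2+1),
        (-1 : R) ^ j * (Nat.choose (n+1-j) j : R) * q ^ (n+1 - 2*j) * p ^ j)
      - p * ∑ j ∈ Finset.range (n/2+1),
        (-1 : R) ^ j * (Nat.choose (n-j) j : R) * q ^ (n - 2*j) * p ^ j := by
  rw [Finset.mul_sum, Finset.mul_sum]
  conv_lhs => rw [show (n+2)/2+1 = (n/2+1)+1 by omega, Finset.sum_range_succ']
  conv_rhs => rw [Finset.sum_range_succ']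
  have hsub : ∑ j ∈ Finset.range ((n+1)/2),
      q * ((-1 : R) ^ (j+1) * (Nat.choose (n+1-(j+1)) (j+1) : R) * q ^ (n+1 - 2*(j+1)) * p ^ (j+1))
      = ∑ j ∈ Finset.range (n/2+1),
      q * ((-1 : R) ^ (j+1) * (Nat.choose (n+1-(j+1)) (j+1) : R) * q ^ (n+1 - 2*(j+1)) * p ^ (j+1)) := by
    refine Finset.sum_subset (Finset.range_subset_range.2 (by omega)) ?_
    intro j hj hj'
    simp only [Finset.mem_range] at hj hj'
    have hz : Nat.choose (n - j) (j + 1) = 0 := Nat.choose_eq_zero_of_lt (by omega)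
    simp [show n+1-(j+1) = n-j by omega, hz]
  rw [hsub]
  have h0 : (-1 : R) ^ 0 * (Nat.choose (n+2-0) 0 : R) * q ^ (n+2-2*0) * p ^ 0
      = q * ((-1 : R) ^ 0 * (Nat.choose (n+1-0) 0 : R) * q ^ (n+1-2*0) * p ^ 0) := by
    simp [pow_succ]; ring
  rw [h0, sub_eq_add_neg, ← Finset.sum_neg_distrib, add_right_comm, ← Finset.sum_add_distrib]
  congr 1
  refine Finset.sum_congr rfl fun j hj => ?_
  simp only [Finset.mem_range] at hj
  rcases le_or_gt (2*j+1) n with hc | hc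
  · rw [show n+2-(j+1) = (n-j)+1 by omega, Nat.choose_succ_succ,
      show n+1-(j+1) = n-j by omega, show n+2-2*(j+1) = n-2*j by omega,
      show n - 2*j = (n+1-2*(j+1))+1 by omega]
    push_cast
    ring
  · have hj2 : 2*j = n := by omega
    have hz : Nat.choose (n+1-(j+1)) (j+1) = 0 := Nat.choose_eq_zero_of_lt (by omega)
    rw [hz, show n+2-(j+1) = j+1 by omega, show n-j = j by omega,
      show n+2-2*(j+1) = 0 by omega, show n-2*j = 0 by omega]
    simp [pow_succ]
    ring


/-- If the sequence `a : ℕ → R` in a commutative ring has generating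
function satisfying `(p·z² − q·z + 1) · Σ aₙ zⁿ = 1` in `R⟦z⟧`, then
`aₙ = Σ_{j=0}^{⌊n/2⌋} (−1)^j C(n−j, j) q^(n−2j) p^j` for all `n`. -/
theorem genfun_binomial_formula {R : Type*} [CommRing R] (p q : R) (a : ℕ → R)
    (h : (PowerSeries.C p * PowerSeries.X ^ 2 - PowerSeries.C q * PowerSeries.X + 1) *
        PowerSeries.mk a = 1)
    (n : ℕ) :
    a n = ∑ j ∈ Finset.range (n / 2 + 1),
      (-1 : R) ^ j * (Nat.choose (n - j) j : R) * q ^ (n - 2 * j) * p ^ j := by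
  have h0 : a 0 = 1 := by
    simpa [sub_mul, add_mul, mul_assoc, PowerSeries.coeff_X_pow_mul', pow_one] using
      congrArg (PowerSeries.coeff 0) h
  have h1 : a 1 = q := by
    have := congrArg (PowerSeries.coeff 1) h
    simp [sub_mul, add_mul, mul_assoc, PowerSeries.coeff_X_pow_mul', pow_one, h0] at this
    linear_combination this
  have hrec : ∀ m, a (m+2) = q * a (m+1) - p * a m := by
    intro m
    have := congrArg (PowerSeries.coeff (m+2)) h
    simp [sub_mul, add_mul, mul_assoc, PowerSeries.coeff_X_pow_mul', pow_one,
      Nat.succ_sub_one] at this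
    linear_combination this
  induction n using Nat.strong_induction_on with
  | _ n ih =>
    match n with
    | 0 => simpa using h0
    | 1 => simpa using h1
    | (m+2) =>
      rw [hrec, ih (m+1) (by omega), ih m (by omega),
        show (m+1)/2 = (m+1)/2 from rfl]
      exact (Skey p q m).symm
end

section
/- For every integer n ≥ 1, the following identity holds in ℤ[x, y]: T(F_n) = y(1 − x) · Σ_{j=0}^{⌊(n−2)/2⌋} C(n−j−2, j)·(x + y + 1)^{n−2j−2}·(−xy)^{j} + x · Σ_{j=0}^{⌊(n−1)/2⌋} C(n−j−1, j)·(x + y + 1)^{n−2j−1}·(−xy)^{j}, where C(m, k) denotes the binomial coefficient (and the first sum is empty when n = 1). -/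
open scoped BigOperators

/-- A finite multigraph: a finite vertex type, a finite edge-index type, and a map
assigning to each edge its unordered pair of endpoints. -/
structure Multigraph where
  V : Type
  E : Type
  [fintypeV : Fintype V]
  [fintypeE : Fintype E]
  ends : E → Sym2 V

namespace Multigraph

attribute [instance] Multigraph.fintypeV Multigraph.fintypeE

/-- The simple graph on `G.V` in which two vertices are joined exactly when they are
connected by an edge from `A`. -/
def spanning (G : Multigraph) (A : Finset G.E) : SimpleGraph G.V :=
  SimpleGraph.fromRel (fun a b => ∃ e ∈ A, G.ends e = s(a, b))

/-- `ω(A)`: the number of connected components of the graph on `V` in which two vertices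
are joined exactly when they are connected by a path of edges from `A`. -/
noncomputable def omega (G : Multigraph) (A : Finset G.E) : ℕ :=
  Nat.card (G.spanning A).ConnectedComponent

/-- `r(A) = |V| − ω(A)`. -/
noncomputable def rk (G : Multigraph) (A : Finset G.E) : ℕ :=
  Fintype.card G.V - G.omega A

/-- The Tutte polynomial `T(G; x, y) = Σ_{A ⊆ E} (x−1)^(r(E)−r(A)) (y−1)^(|A|−r(A))`,
evaluated at elements `x`, `y` of a commutative ring. -/
noncomputable def tutte (G : Multigraph) {R : Type*} [CommRing R] (x y : R) : R :=
  ∑ A : Finset G.E,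
    (x - 1) ^ (G.rk Finset.univ - G.rk A) * (y - 1) ^ (A.card - G.rk A)

/-- A multigraph is connected if its full spanning graph is connected. -/
def Connected (G : Multigraph) : Prop :=
  (G.spanning Finset.univ).Connected

/-- The setoid on `G.V` identifying all vertices of `S` with each other. -/
def contractSetoid (G : Multigraph) (S : Set G.V) : Setoid G.V where
  r a b := a = b ∨ (a ∈ S ∧ b ∈ S)
  iseqv := by
    refine ⟨fun _ => Or.inl rfl, ?_, ?_⟩
    · rintro a b (rfl | h)
      · exact Or.inl rfl
      · exact Or.inr ⟨h.2, h.1⟩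
    · rintro a b c (rfl | h1) (rfl | h2) <;> tauto

/-- `G/S`: the multigraph obtained from `G` by identifying all the vertices of `S` into
one vertex, keeping all edges. -/
noncomputable def contract (G : Multigraph) (S : Set G.V) : Multigraph where
  V := Quotient (G.contractSetoid S)
  E := G.E
  fintypeV := @Quotient.fintype G.V G.fintypeV (G.contractSetoid S) (Classical.decRel _)
  fintypeE := G.fintypeE
  ends e := (G.ends e).map (Quotient.mk (G.contractSetoid S))

/-- The projection map from `G` to `G/S` on vertices. -/
def contractProj (G : Multigraph) (S : Set G.V) : G.V → (G.contract S).V :=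
  Quotient.mk (G.contractSetoid S)

/-- The disjoint union of two multigraphs. -/
def disjSum (G H : Multigraph) : Multigraph where
  V := G.V ⊕ H.V
  E := G.E ⊕ H.E
  ends := Sum.elim (fun e => (G.ends e).map Sum.inl) (fun e => (H.ends e).map Sum.inr)

/-- Add one extra edge joining `a` and `b`. -/
def addEdge (G : Multigraph) (a b : G.V) : Multigraph where
  V := G.V
  E := G.E ⊕ Unit
  ends := Sum.elim G.ends (fun _ => s(a, b))

end Multigraph

/-- The field `ℚ(x, y)` of rational functions in two variables over `ℚ`. -/
abbrev QXY : Type := FractionRing (MvPolynomial (Fin 2) ℚ)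

/-- The rational function `x` in `ℚ(x, y)`. -/
noncomputable def Xq : QXY := algebraMap (MvPolynomial (Fin 2) ℚ) QXY (MvPolynomial.X 0)

/-- The rational function `y` in `ℚ(x, y)`. -/
noncomputable def Yq : QXY := algebraMap (MvPolynomial (Fin 2) ℚ) QXY (MvPolynomial.X 1)

/-- The Tutte polynomial of a multigraph regarded as an element of `ℚ(x, y)`. -/
noncomputable def TT (G : Multigraph) : QXY := G.tutte Xq Yq

/-- A finite simple graph regarded as a multigraph: the edges are indexed by the edge
set of the graph. -/
noncomputable def SimpleGraph.toMultigraph {V : Type} [Fintype V] (G : SimpleGraph V) :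
    Multigraph where
  V := V
  E := G.edgeSet
  fintypeV := inferInstance
  fintypeE := Fintype.ofFinite G.edgeSet
  ends := Subtype.val

/-- The `n`-fan `F_n = K₁ ∨ P_n`: the apex `none` is adjacent to every vertex `some i`,
and `some i` is adjacent to `some (i+1)` for consecutive indices. -/
def fanGraph (n : ℕ) : SimpleGraph (Option (Fin n)) :=
  SimpleGraph.fromRel (fun a b =>
    a = none ∨ ∃ i j : Fin n, a = some i ∧ b = some j ∧ (i : ℕ) + 1 = (j : ℕ))

/-- The polynomial ring `ℤ[x, y]`. -/
abbrev Zxy : Type := MvPolynomial (Fin 2) ℤ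

/-- The polynomial `x` in `ℤ[x, y]`. -/
noncomputable def xZ : Zxy := MvPolynomial.X 0

/-- The polynomial `y` in `ℤ[x, y]`. -/
noncomputable def yZ : Zxy := MvPolynomial.X 1


open Finset
namespace FanDP

/-- root of the block of `i` determined by path-edge set `P`. -/
def rootF (P : Finset ℕ) : ℕ → ℕ
  | 0 => 0
  | (i+1) => if i ∈ P then rootF P i else i + 1

lemma rootF_zero (P : Finset ℕ) : rootF P 0 = 0 := rfl

lemma rootF_succ (P : Finset ℕ) (i : ℕ) :
    rootF P (i+1) = if i ∈ P then rootF P i else i + 1 := rfl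

lemma rootF_le (P : Finset ℕ) : ∀ i, rootF P i ≤ i
  | 0 => le_refl 0
  | (i+1) => by
      rw [rootF_succ]
      split
      · exact (rootF_le P i).trans (Nat.le_succ i)
      · exact le_refl _

lemma rootF_idem (P : Finset ℕ) : ∀ i, rootF P (rootF P i) = rootF P i
  | 0 => rfl
  | (i+1) => by
      rw [rootF_succ]
      split
      · exact rootF_idem P i
      · next h =>
          rw [rootF_succ, if_neg h]

lemma rootF_congr {P Q : Finset ℕ} : ∀ {i}, (∀ j, j < i → (j ∈ P ↔ j ∈ Q)) →
    rootF P i = rootF Q i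
  | 0, _ => rfl
  | (i+1), h => by
      rw [rootF_succ, rootF_succ]
      by_cases hi : i ∈ P
      · rw [if_pos hi, if_pos ((h i (Nat.lt_succ_self i)).mp hi)]
        exact rootF_congr (fun j hj => h j (hj.trans (Nat.lt_succ_self i)))
      · rw [if_neg hi, if_neg (fun hc => hi ((h i (Nat.lt_succ_self i)).mpr hc))]

lemma rootF_insert (P : Finset ℕ) {k i : ℕ} (h : i ≤ k) :
    rootF (insert k P) i = rootF P i := by
  refine rootF_congr (fun j hj => ?_)
  have : j ≠ k := by omega
  simp [this]

lemma rootF_succ_eq_iff (P : Finset ℕ) (i : ℕ) :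
    rootF P (i+1) = i + 1 ↔ i ∉ P := by
  rw [rootF_succ]
  constructor
  · intro h hm
    rw [if_pos hm] at h
    have := rootF_le P i; omega
  · intro h; rw [if_neg h]


/-- image of the spoke set under the root map: roots of spoked blocks. -/
def img (S P : Finset ℕ) : Finset ℕ := S.image (rootF P)

/-- the block of the last vertex (of `n` vertices) has a spoke. -/
def lsp (n : ℕ) (S P : Finset ℕ) : Prop := rootF P (n-1) ∈ img S P

instance (n : ℕ) (S P : Finset ℕ) : Decidable (lsp n S P) := by
  unfold lsp; infer_instance

/-- number of spokeless blocks. -/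
def mtot (n : ℕ) (S P : Finset ℕ) : ℕ :=
  ((range n).filter (fun r => rootF P r = r ∧ r ∉ img S P)).card

/-- number of spokeless blocks, not counting the last block. -/
def mexc (n : ℕ) (S P : Finset ℕ) : ℕ :=
  ((range n).filter (fun r => rootF P r = r ∧ r ∉ img S P ∧ r ≠ rootF P (n-1))).card

noncomputable def uu : Zxy := (xZ - 1) * (yZ - 1)

noncomputable def termA (n : ℕ) (S P : Finset ℕ) : Zxy :=
  if lsp n S P then uu ^ mexc n S P * (yZ - 1) ^ (S.card + P.card) else 0

noncomputable def termB (n : ℕ) (S P : Finset ℕ) : Zxy :=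
  if lsp n S P then 0 else uu ^ mexc n S P * (yZ - 1) ^ (S.card + P.card)

noncomputable def SA (n : ℕ) : Zxy :=
  ∑ S ∈ (range n).powerset, ∑ P ∈ (range (n-1)).powerset, termA n S P

noncomputable def SB (n : ℕ) : Zxy :=
  ∑ S ∈ (range n).powerset, ∑ P ∈ (range (n-1)).powerset, termB n S P

lemma mtot_eq_mexc (n : ℕ) (hn : 1 ≤ n) (S P : Finset ℕ) :
    mtot n S P = mexc n S P + (if lsp n S P then 0 else 1) := by
  classical
  have hr0lt : rootF P (n-1) < n := by have := rootF_le P (n-1); omega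
  have hr0root : rootF P (rootF P (n-1)) = rootF P (n-1) := rootF_idem P (n-1)
  have hsplit := Finset.card_filter_add_card_filter_not
    (s := (range n).filter (fun r => rootF P r = r ∧ r ∉ img S P))
    (p := fun r => r ≠ rootF P (n-1))
  have h1 : (((range n).filter (fun r => rootF P r = r ∧ r ∉ img S P)).filter
      (fun r => r ≠ rootF P (n-1)))
      = (range n).filter (fun r => rootF P r = r ∧ r ∉ img S P ∧ r ≠ rootF P (n-1)) := by
    rw [Finset.filter_filter]
    apply Finset.filter_congr
    intro r _
    tauto
  have h2 : (((range n).filter (fun r => rootF P r = r ∧ r ∉ img S P)).filter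
      (fun r => ¬ r ≠ rootF P (n-1))) = if lsp n S P then ∅ else {rootF P (n-1)} := by
    by_cases hl : lsp n S P
    · rw [if_pos hl]
      ext r
      simp only [Finset.mem_filter, Finset.mem_range, not_not, Finset.notMem_empty, iff_false]
      rintro ⟨⟨-, -, h⟩, rfl⟩
      exact h hl
    · rw [if_neg hl]
      ext r
      simp only [Finset.mem_filter, Finset.mem_range, not_not, Finset.mem_singleton]
      constructor
      · rintro ⟨-, h⟩; exact h
      · rintro rfl
        exact ⟨⟨hr0lt, hr0root, hl⟩, rfl⟩
  rw [h1, h2] at hsplit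
  unfold mtot mexc at *
  by_cases hl : lsp n S P
  · rw [if_pos hl] at hsplit ⊢
    rw [Finset.card_empty] at hsplit
    omega
  · rw [if_neg hl] at hsplit ⊢
    rw [Finset.card_singleton] at hsplit
    omega


section trans
variable {m : ℕ} {S P : Finset ℕ}

lemma not_mem_P (hP : P ⊆ range m) : m ∉ P := fun h => by
  have := Finset.mem_range.mp (hP h); omega

lemma not_mem_S (hS : S ⊆ range (m+1)) : m + 1 ∉ S := fun h => by
  have := Finset.mem_range.mp (hS h); omega

lemma root_top_free (hP : P ⊆ range m) : rootF P (m+1) = m+1 :=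
  (rootF_succ_eq_iff P m).mpr (not_mem_P hP)

lemma root_top_ins : rootF (insert m P) (m+1) = rootF P m := by
  rw [rootF_succ, if_pos (Finset.mem_insert_self m P), rootF_insert P le_rfl]

lemma img_le (hS : S ⊆ range (m+1)) (P' : Finset ℕ) {r : ℕ} (hr : r ∈ img S P') :
    r ≤ m := by
  obtain ⟨k, hk, rfl⟩ := Finset.mem_image.mp hr
  have := Finset.mem_range.mp (hS hk)
  have := rootF_le P' k
  omega

lemma img_insertP (hS : S ⊆ range (m+1)) : img S (insert m P) = img S P := by
  unfold img
  apply Finset.image_congr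
  intro k hk
  exact rootF_insert P (by have := Finset.mem_range.mp (hS hk); omega)

lemma img_insertS (P' : Finset ℕ) (a : ℕ) :
    img (insert a S) P' = insert (rootF P' a) (img S P') := by
  unfold img; rw [Finset.image_insert]

lemma lsp_00 (hS : S ⊆ range (m+1)) (hP : P ⊆ range m) : ¬ lsp (m+2) S P := by
  unfold lsp
  rw [show m+2-1 = m+1 from rfl, root_top_free hP]
  intro h
  have := img_le hS P h; omega

lemma lsp_10 : lsp (m+2) (insert (m+1) S) P := by
  unfold lsp
  rw [show m+2-1 = m+1 from rfl]
  exact Finset.mem_image_of_mem _ (Finset.mem_insert_self _ _)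

lemma lsp_01 (hS : S ⊆ range (m+1)) : lsp (m+2) S (insert m P) ↔ lsp (m+1) S P := by
  unfold lsp
  rw [show m+2-1 = m+1 from rfl, show m+1-1 = m from rfl, root_top_ins, img_insertP hS]

lemma lsp_11 : lsp (m+2) (insert (m+1) S) (insert m P) := by
  unfold lsp
  rw [show m+2-1 = m+1 from rfl]
  exact Finset.mem_image_of_mem _ (Finset.mem_insert_self _ _)

lemma M1 (hS : S ⊆ range (m+1)) (hP : P ⊆ range m) :
    mexc (m+2) S P = mtot (m+1) S P := by
  unfold mexc mtot
  congr 1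
  rw [show m+2-1 = m+1 from rfl, root_top_free hP, range_add_one, Finset.filter_insert,
    if_neg (by simp)]
  apply Finset.filter_congr
  intro r hr
  have h1 : r ≠ m+1 := by have := Finset.mem_range.mp hr; omega
  tauto

lemma M2 (hS : S ⊆ range (m+1)) (hP : P ⊆ range m) :
    mexc (m+2) (insert (m+1) S) P = mtot (m+1) S P := by
  unfold mexc mtot
  congr 1
  rw [show m+2-1 = m+1 from rfl,
    show img (insert (m+1) S) P = insert (m+1) (img S P) from by
      rw [img_insertS, root_top_free hP],
    root_top_free hP, range_add_one, Finset.filter_insert, if_neg (by simp)]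
  apply Finset.filter_congr
  intro r hr
  have h1 : r ≠ m+1 := by have := Finset.mem_range.mp hr; omega
  simp only [Finset.mem_insert, not_or]
  tauto

lemma M3 (hS : S ⊆ range (m+1)) (hP : P ⊆ range m) :
    mexc (m+2) S (insert m P) = mexc (m+1) S P := by
  unfold mexc
  congr 1
  rw [show m+2-1 = m+1 from rfl, show m+1-1 = m from rfl, root_top_ins, img_insertP hS,
    range_add_one, Finset.filter_insert,
    if_neg (by
      rw [root_top_ins]
      rintro ⟨h, -⟩
      have := rootF_le P m; omega)]
  apply Finset.filter_congr
  intro r hr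
  rw [rootF_insert P (by have := Finset.mem_range.mp hr; omega)]

lemma M4 (hS : S ⊆ range (m+1)) (hP : P ⊆ range m) :
    mexc (m+2) (insert (m+1) S) (insert m P) = mexc (m+1) S P := by
  unfold mexc
  congr 1
  rw [show m+2-1 = m+1 from rfl, show m+1-1 = m from rfl,
    show img (insert (m+1) S) (insert m P) = insert (rootF P m) (img S P) from by
      rw [img_insertS, root_top_ins, img_insertP hS],
    root_top_ins, range_add_one, Finset.filter_insert,
    if_neg (by
      rw [root_top_ins]
      rintro ⟨h, -⟩
      have := rootF_le P m; omega)]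
  apply Finset.filter_congr
  intro r hr
  rw [rootF_insert P (by have := Finset.mem_range.mp hr; omega)]
  simp only [Finset.mem_insert, not_or]
  tauto

lemma card_insS (hS : S ⊆ range (m+1)) : (insert (m+1) S).card = S.card + 1 :=
  Finset.card_insert_of_notMem (not_mem_S hS)

lemma card_insP (hP : P ⊆ range m) : (insert m P).card = P.card + 1 :=
  Finset.card_insert_of_notMem (not_mem_P hP)

lemma bracketA (hS : S ⊆ range (m+1)) (hP : P ⊆ range m) :
    termA (m+2) S P + termA (m+2) S (insert m P)
      + (termA (m+2) (insert (m+1) S) P + termA (m+2) (insert (m+1) S) (insert m P))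
    = (yZ^2 - 1) * termA (m+1) S P + xZ * (yZ - 1)^2 * termB (m+1) S P := by
  unfold termA termB
  rw [if_neg (lsp_00 hS hP), if_pos lsp_10, if_pos lsp_11,
    if_congr (lsp_01 hS) rfl rfl,
    M2 hS hP, M3 hS hP, M4 hS hP, card_insS hS, card_insP hP,
    mtot_eq_mexc (m+1) (by omega) S P]
  by_cases h : lsp (m+1) S P
  · rw [if_pos h, if_pos h, if_pos h, if_pos h]
    unfold uu; ring
  · rw [if_neg h, if_neg h, if_neg h, if_neg h]
    unfold uu; ring

lemma bracketB (hS : S ⊆ range (m+1)) (hP : P ⊆ range m) :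
    termB (m+2) S P + termB (m+2) S (insert m P)
      + (termB (m+2) (insert (m+1) S) P + termB (m+2) (insert (m+1) S) (insert m P))
    = termA (m+1) S P + xZ * (yZ - 1) * termB (m+1) S P := by
  unfold termA termB
  rw [if_neg (lsp_00 hS hP), if_pos lsp_10, if_pos lsp_11,
    if_congr (lsp_01 hS) rfl rfl,
    M1 hS hP, M3 hS hP, card_insP hP,
    mtot_eq_mexc (m+1) (by omega) S P]
  by_cases h : lsp (m+1) S P
  · rw [if_pos h, if_pos h, if_pos h, if_pos h]
    unfold uu; ring
  · rw [if_neg h, if_neg h, if_neg h, if_neg h]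
    unfold uu; ring

lemma double_split (F : Finset ℕ → Finset ℕ → Zxy) :
    (∑ S ∈ (range (m+2)).powerset, ∑ P ∈ (range (m+1)).powerset, F S P)
    = ∑ S ∈ (range (m+1)).powerset, ∑ P ∈ (range m).powerset,
        (F S P + F S (insert m P) + (F (insert (m+1) S) P + F (insert (m+1) S) (insert m P))) := by
  have h1 : ∀ S : Finset ℕ, (∑ P ∈ (range (m+1)).powerset, F S P)
      = ∑ P ∈ (range m).powerset, (F S P + F S (insert m P)) := by
    intro S
    rw [range_add_one, Finset.sum_powerset_insert (by simp), Finset.sum_add_distrib]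
  rw [range_add_one, Finset.sum_powerset_insert (by simp)]
  simp_rw [h1]
  rw [← Finset.sum_add_distrib]
  apply Finset.sum_congr rfl
  intro S _
  rw [← Finset.sum_add_distrib]

end trans

noncomputable def Cc : ℕ → Zxy
  | 0 => 0
  | 1 => 1
  | (n+2) => (xZ + yZ + 1) * Cc (n+1) - xZ * yZ * Cc n

lemma Cc_zero : Cc 0 = 0 := rfl
lemma Cc_one : Cc 1 = 1 := rfl
lemma Cc_two : Cc (n+2) = (xZ + yZ + 1) * Cc (n+1) - xZ * yZ * Cc n := rfl

lemma SA_succ (m : ℕ) : SA (m+2) = (yZ^2 - 1) * SA (m+1) + xZ * (yZ-1)^2 * SB (m+1) := by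
  unfold SA SB
  rw [show m+2-1 = m+1 from rfl, show m+1-1 = m from rfl, double_split]
  rw [Finset.mul_sum, Finset.mul_sum, ← Finset.sum_add_distrib]
  apply Finset.sum_congr rfl
  intro S hS
  rw [Finset.mul_sum, Finset.mul_sum, ← Finset.sum_add_distrib]
  apply Finset.sum_congr rfl
  intro P hP
  exact bracketA (Finset.mem_powerset.mp hS) (Finset.mem_powerset.mp hP)

lemma SB_succ (m : ℕ) : SB (m+2) = SA (m+1) + xZ * (yZ-1) * SB (m+1) := by
  unfold SA SB
  rw [show m+2-1 = m+1 from rfl, show m+1-1 = m from rfl, double_split]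
  rw [Finset.mul_sum, ← Finset.sum_add_distrib]
  apply Finset.sum_congr rfl
  intro S hS
  rw [Finset.mul_sum, ← Finset.sum_add_distrib]
  apply Finset.sum_congr rfl
  intro P hP
  exact bracketB (Finset.mem_powerset.mp hS) (Finset.mem_powerset.mp hP)

lemma SA_one : SA 1 = yZ - 1 := by
  unfold SA
  rw [show (1:ℕ)-1 = 0 from rfl, Finset.range_zero, Finset.powerset_empty,
    Finset.range_one,
    show ({0} : Finset ℕ).powerset = {∅, {0}} from by decide,
    Finset.sum_pair (by decide : (∅ : Finset ℕ) ≠ {0}),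
    Finset.sum_singleton, Finset.sum_singleton]
  unfold termA
  rw [if_neg (by decide), if_pos (by decide),
    show mexc 1 {0} ∅ = 0 from by decide]
  simp

lemma SB_one : SB 1 = 1 := by
  unfold SB
  rw [show (1:ℕ)-1 = 0 from rfl, Finset.range_zero, Finset.powerset_empty,
    Finset.range_one,
    show ({0} : Finset ℕ).powerset = {∅, {0}} from by decide,
    Finset.sum_pair (by decide : (∅ : Finset ℕ) ≠ {0}),
    Finset.sum_singleton, Finset.sum_singleton]
  unfold termB
  rw [if_neg (by decide), if_pos (by decide),
    show mexc 1 ∅ ∅ = 0 from by decide]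
  simp

lemma SA_SB_closed (m : ℕ) : SA (m+1) = (yZ-1)^(m+1) * Cc (m+1)
    ∧ SB (m+1) = (yZ-1)^m * (Cc (m+1) - yZ * Cc m) := by
  induction m with
  | zero =>
    refine ⟨?_, ?_⟩
    · rw [SA_one, Cc_one]; ring
    · rw [SB_one, Cc_one, Cc_zero]; ring
  | succ k ih =>
    obtain ⟨hA, hB⟩ := ih
    refine ⟨?_, ?_⟩
    · rw [SA_succ, hA, hB, Cc_two]; ring
    · rw [SB_succ, hA, hB, Cc_two]; ring


noncomputable def cbin (n j : ℕ) : Zxy :=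
  (Nat.choose (n-j) j : Zxy) * (xZ+yZ+1)^(n-2*j) * (-(xZ*yZ))^j

lemma cbin_step {n j : ℕ} (hj : j ≤ n) :
    cbin (n+2) (j+1) = (xZ+yZ+1) * cbin (n+1) (j+1) + (-(xZ*yZ)) * cbin n j := by
  unfold cbin
  rw [show n+2-(j+1) = n+1-j from by omega, show n+1-(j+1) = n-j from by omega]
  by_cases h : 2*j < n
  · rw [show n+2-2*(j+1) = n-2*j from by omega,
      show n+1-2*(j+1) = n-2*j-1 from by omega,
      show n+1-j = (n-j)+1 from by omega,
      Nat.choose_succ_succ (n-j) j,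
      show n-2*j = (n-2*j-1)+1 from by omega]
    push_cast
    ring
  · by_cases h' : n = 2*j
    · rw [show n+2-2*(j+1) = 0 from by omega, show n-2*j = 0 from by omega,
        show n+1-j = j+1 from by omega, show n-j = j from by omega,
        Nat.choose_self, Nat.choose_succ_self, Nat.choose_self]
      push_cast
      ring
    · have h1 : Nat.choose (n+1-j) (j+1) = 0 := Nat.choose_eq_zero_of_lt (by omega)
      have h2 : Nat.choose (n-j) (j+1) = 0 := Nat.choose_eq_zero_of_lt (by omega)
      have h3 : Nat.choose (n-j) j = 0 := Nat.choose_eq_zero_of_lt (by omega)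
      rw [h1, h2, h3]
      push_cast
      ring

lemma Cc_bin (n : ℕ) : Cc (n+1) = ∑ j ∈ range (n+1), cbin n j := by
  induction n using Nat.twoStepInduction with
  | zero =>
    rw [Cc_one, Finset.sum_range_one]
    unfold cbin
    simp
  | one =>
    rw [show (1:ℕ)+1 = 0+2 from rfl, Cc_two, Cc_one, Cc_zero]
    rw [Finset.sum_range_succ, Finset.sum_range_one]
    unfold cbin
    norm_num
  | more n ih1 ih2 =>
    rw [show n+2+1 = (n+1)+2 from rfl, Cc_two, ih1, ih2]
    rw [Finset.sum_range_succ' (cbin (n+2)) (n+2), Finset.sum_range_succ (fun j => cbin (n+2) (j+1)) (n+1)]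
    have hlast : cbin (n+2) (n+1+1) = 0 := by
      unfold cbin
      rw [show n+2-(n+2) = 0 from by omega, Nat.choose_zero_succ]
      push_cast
      ring
    rw [hlast, add_zero]
    rw [Finset.sum_range_succ' (cbin (n+1)) (n+1)]
    have h0a : cbin (n+2) 0 = (xZ+yZ+1)^(n+2) := by
      unfold cbin; simp
    have h0b : cbin (n+1) 0 = (xZ+yZ+1)^(n+1) := by
      unfold cbin; simp
    rw [h0a, h0b, mul_add, Finset.mul_sum, Finset.mul_sum]
    have hsum : ∑ j ∈ range (n+1), cbin (n+2) (j+1)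
        = ∑ j ∈ range (n+1), ((xZ+yZ+1) * cbin (n+1) (j+1) + (-(xZ*yZ)) * cbin n j) := by
      apply Finset.sum_congr rfl
      intro j hj
      exact cbin_step (by have := Finset.mem_range.mp hj; omega)
    rw [hsum, Finset.sum_add_distrib]
    simp only [neg_mul, Finset.sum_neg_distrib]
    ring

lemma Cc_bin' (n : ℕ) : Cc (n+1) = ∑ j ∈ range ((n+2)/2), cbin n j := by
  rw [Cc_bin]
  symm
  apply Finset.sum_subset
  · apply Finset.range_subset_range.mpr; omega
  · intro j hj hj'
    have h1 := Finset.mem_range.mp hj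
    have h2 : (n+2)/2 ≤ j := by
      by_contra hc
      exact hj' (Finset.mem_range.mpr (by omega))
    unfold cbin
    rw [Nat.choose_eq_zero_of_lt (by omega)]
    push_cast
    ring

end FanDP

open Finset Function SimpleGraph FanDP

lemma card_cc {V C : Type*} [Fintype V] [DecidableEq C] (G : SimpleGraph V) (f : V → C)
    (h1 : ∀ a b, G.Adj a b → f a = f b) (h2 : ∀ a b, f a = f b → G.Reachable a b) :
    Nat.card G.ConnectedComponent = (Finset.univ.image f).card := by
  have hwalk : ∀ a b, G.Reachable a b → f a = f b := by
    intro a b ⟨w⟩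
    induction w with
    | nil => rfl
    | cons h _ ih => exact (h1 _ _ h).trans ih
  let φ : G.ConnectedComponent → {c // c ∈ Finset.univ.image f} :=
    SimpleGraph.ConnectedComponent.lift
      (fun v => ⟨f v, Finset.mem_image_of_mem f (Finset.mem_univ v)⟩)
      (fun v w p _ => Subtype.ext (hwalk v w ⟨p⟩))
  have hbij : Bijective φ := by
    constructor
    · intro x y
      refine SimpleGraph.ConnectedComponent.ind₂ (fun a b h => ?_) x y
      exact SimpleGraph.ConnectedComponent.sound (h2 a b (congrArg Subtype.val h))
    · rintro ⟨c, hc⟩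
      obtain ⟨v, -, rfl⟩ := Finset.mem_image.mp hc
      exact ⟨G.connectedComponentMk v, rfl⟩
  rw [Nat.card_eq_of_bijective φ hbij]
  rw [Nat.card_eq_fintype_card, Fintype.card_coe]

namespace FanEdges

variable (n : ℕ)

def spokeE (i : Fin n) : Sym2 (Option (Fin n)) := s(none, some i)

def pathE (i : Fin (n-1)) : Sym2 (Option (Fin n)) :=
  s(some ⟨i.1, by have := i.2; omega⟩, some ⟨i.1+1, by have := i.2; omega⟩)

lemma spokeE_mem (i : Fin n) : spokeE n i ∈ (fanGraph n).edgeSet := by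
  rw [spokeE, SimpleGraph.mem_edgeSet, fanGraph, SimpleGraph.fromRel_adj]
  exact ⟨by simp, Or.inl (Or.inl rfl)⟩

lemma pathE_mem (i : Fin (n-1)) : pathE n i ∈ (fanGraph n).edgeSet := by
  rw [pathE, SimpleGraph.mem_edgeSet, fanGraph, SimpleGraph.fromRel_adj]
  refine ⟨by simp [Fin.ext_iff], Or.inl (Or.inr ?_)⟩
  exact ⟨⟨i.1, by have := i.2; omega⟩, ⟨i.1+1, by have := i.2; omega⟩, rfl, rfl, rfl⟩

noncomputable def edgeFun : Fin n ⊕ Fin (n-1) → (fanGraph n).toMultigraph.E :=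
  Sum.elim (fun i => ⟨spokeE n i, spokeE_mem n i⟩) (fun i => ⟨pathE n i, pathE_mem n i⟩)

lemma edgeFun_inj : Injective (edgeFun n) := by
  have keyS : ∀ a b : Fin n, spokeE n a = spokeE n b → a = b := by
    intro a b h
    rw [spokeE, spokeE, Sym2.eq_iff] at h
    rcases h with ⟨-, h⟩ | ⟨h, -⟩
    · exact Option.some_injective _ h
    · exact absurd h (by simp)
  have keySP : ∀ (a : Fin n) (b : Fin (n-1)), spokeE n a ≠ pathE n b := by
    intro a b h
    rw [spokeE, pathE, Sym2.eq_iff] at h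
    rcases h with ⟨h, -⟩ | ⟨h, -⟩ <;> exact absurd h (by simp)
  have keyP : ∀ a b : Fin (n-1), pathE n a = pathE n b → a = b := by
    intro a b h
    rw [pathE, pathE, Sym2.eq_iff] at h
    rcases h with ⟨h1, h2⟩ | ⟨h1, h2⟩ <;>
    · simp only [Option.some.injEq, Fin.ext_iff] at h1 h2
      exact Fin.ext (by omega)
  rintro (a | a) (b | b) h
  · exact congrArg Sum.inl (keyS a b (congrArg Subtype.val h))
  · exact absurd (congrArg Subtype.val h) (keySP a b)
  · exact absurd (congrArg Subtype.val h).symm (keySP b a)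
  · exact congrArg Sum.inr (keyP a b (congrArg Subtype.val h))

lemma edgeFun_surj : Surjective (edgeFun n) := by
  rintro ⟨e, he⟩
  revert he
  induction e using Sym2.ind with
  | _ a b =>
    intro he
    have he' := he
    rw [SimpleGraph.mem_edgeSet, fanGraph, SimpleGraph.fromRel_adj] at he'
    have main : ∀ u v : Option (Fin n), u ≠ v →
        (u = none ∨ ∃ i j : Fin n, u = some i ∧ v = some j ∧ (i:ℕ)+1 = (j:ℕ)) →
        ∃ z, (edgeFun n z).1 = s(u, v) := by
      intro u v huv h
      rcases h with rfl | ⟨i, j, rfl, rfl, hij⟩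
      · rcases v with _ | v
        · exact absurd rfl huv
        · exact ⟨Sum.inl v, rfl⟩
      · have hlt : i.1 < n - 1 := by have := j.2; omega
        refine ⟨Sum.inr ⟨i.1, hlt⟩, ?_⟩
        show pathE n _ = _
        rw [pathE, Sym2.eq_iff]
        left
        constructor
        · exact congrArg some (Fin.ext rfl)
        · rw [Option.some.injEq]
          exact Fin.ext (by simpa using hij)
    obtain ⟨hne, h | h⟩ := he'
    · obtain ⟨z, hz⟩ := main a b hne h
      exact ⟨z, Subtype.ext hz⟩
    · obtain ⟨z, hz⟩ := main b a (Ne.symm hne) h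
      exact ⟨z, Subtype.ext (hz.trans Sym2.eq_swap)⟩

noncomputable def edgeEquiv : (Fin n ⊕ Fin (n-1)) ≃ (fanGraph n).toMultigraph.E :=
  Equiv.ofBijective (edgeFun n) ⟨edgeFun_inj n, edgeFun_surj n⟩

end FanEdges
namespace FanCore
open FanEdges FanDP

variable (n : ℕ) (S : Finset (Fin n)) (P : Finset (Fin (n-1)))

noncomputable def eset : Finset (fanGraph n).toMultigraph.E :=
  (S.disjSum P).map (edgeEquiv n).toEmbedding

def SN : Finset ℕ := S.image Fin.val
def PN : Finset ℕ := P.image Fin.val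

noncomputable def H : SimpleGraph (Option (Fin n)) :=
  (fanGraph n).toMultigraph.spanning (eset n S P)

lemma val_mem_iff {e : Sym2 (Option (Fin n))} :
    (∃ f ∈ eset n S P, ((fanGraph n).toMultigraph).ends f = e) ↔
    ((∃ i ∈ S, spokeE n i = e) ∨ (∃ i ∈ P, pathE n i = e)) := by
  constructor
  · rintro ⟨f, hf, rfl⟩
    obtain ⟨z, hz, rfl⟩ := Finset.mem_map.mp hf
    rcases Finset.mem_disjSum.mp hz with ⟨i, hi, rfl⟩ | ⟨i, hi, rfl⟩
    · exact Or.inl ⟨i, hi, rfl⟩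
    · exact Or.inr ⟨i, hi, rfl⟩
  · rintro (⟨i, hi, rfl⟩ | ⟨i, hi, rfl⟩)
    · exact ⟨edgeEquiv n (Sum.inl i),
        Finset.mem_map_of_mem _ (Finset.inl_mem_disjSum.mpr hi), rfl⟩
    · exact ⟨edgeEquiv n (Sum.inr i),
        Finset.mem_map_of_mem _ (Finset.inr_mem_disjSum.mpr hi), rfl⟩

lemma adj_iff {a b : Option (Fin n)} :
    (H n S P).Adj a b ↔ a ≠ b ∧
      ((∃ i ∈ S, spokeE n i = s(a,b)) ∨ (∃ i ∈ P, pathE n i = s(a,b))) := by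
  unfold H Multigraph.spanning
  change (SimpleGraph.fromRel (V := Option (Fin n)) (fun a b => ∃ e ∈ eset n S P,
    (fanGraph n).toMultigraph.ends e = s(a, b))).Adj a b ↔ _
  rw [SimpleGraph.fromRel_adj]
  constructor
  · rintro ⟨hne, h | h⟩
    · exact ⟨hne, (val_mem_iff n S P).mp h⟩
    · refine ⟨hne, ?_⟩
      rcases (val_mem_iff n S P).mp h with ⟨i, hi, he⟩ | ⟨i, hi, he⟩
      · exact Or.inl ⟨i, hi, he.trans Sym2.eq_swap⟩
      · exact Or.inr ⟨i, hi, he.trans Sym2.eq_swap⟩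
  · rintro ⟨hne, h⟩
    exact ⟨hne, Or.inl ((val_mem_iff n S P).mpr h)⟩

lemma adj_spoke {i : Fin n} (hi : i ∈ S) : (H n S P).Adj none (some i) :=
  (adj_iff n S P).mpr ⟨by simp, Or.inl ⟨i, hi, rfl⟩⟩

lemma adj_path {i : Fin (n-1)} (hi : i ∈ P) (h1 : i.1 < n) (h2 : i.1 + 1 < n) :
    (H n S P).Adj (some ⟨i.1, h1⟩) (some ⟨i.1+1, h2⟩) :=
  (adj_iff n S P).mpr ⟨by simp [Fin.ext_iff], Or.inr ⟨i, hi, rfl⟩⟩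

def labelF : Option (Fin n) → Option ℕ := fun v =>
  match v with
  | none => none
  | some i => if rootF (PN n P) i.1 ∈ img (SN n S) (PN n P) then none
              else some (rootF (PN n P) i.1)

lemma label_adj {a b : Option (Fin n)} (h : (H n S P).Adj a b) :
    labelF n S P a = labelF n S P b := by
  rw [adj_iff] at h
  obtain ⟨hne, ⟨i, hi, he⟩ | ⟨i, hi, he⟩⟩ := h
  · rw [spokeE, Sym2.eq_iff] at he
    have hmem : rootF (PN n P) i.1 ∈ img (SN n S) (PN n P) :=
      Finset.mem_image_of_mem _ (Finset.mem_image_of_mem _ hi)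
    rcases he with ⟨ha, hb⟩ | ⟨ha, hb⟩ <;> rw [← ha, ← hb] <;>
      simp [labelF, hmem]
  · rw [pathE, Sym2.eq_iff] at he
    have hmemP : i.1 ∈ PN n P := Finset.mem_image_of_mem _ hi
    have hroot : rootF (PN n P) (i.1+1) = rootF (PN n P) i.1 := by
      rw [rootF_succ, if_pos hmemP]
    rcases he with ⟨ha, hb⟩ | ⟨ha, hb⟩ <;> rw [← ha, ← hb] <;>
      simp [labelF, hroot]

lemma reach_root (k : ℕ) : ∀ (a b : Fin n), a.1 = k → b.1 = rootF (PN n P) a.1 →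
    (H n S P).Reachable (some a) (some b) := by
  induction k with
  | zero =>
    intro a b ha hb
    have hba : b = a := Fin.ext (by rw [hb, ha, rootF_zero])
    rw [hba]
  | succ k ih =>
    intro a b ha hb
    by_cases hk : k ∈ PN n P
    · obtain ⟨i, hiP, hival⟩ := Finset.mem_image.mp hk
      have hkn : k + 1 < n := by rw [← ha]; exact a.2
      have h1 : i.1 < n := by omega
      have h2 : i.1 + 1 < n := by omega
      have hadj := adj_path n S P hiP h1 h2
      have ha' : (⟨i.1+1, h2⟩ : Fin n) = a := Fin.ext (by simp [hival, ha])
      rw [ha'] at hadj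
      have hroot : rootF (PN n P) (k+1) = rootF (PN n P) k := by
        rw [rootF_succ, if_pos hk]
      have hreach := ih ⟨i.1, h1⟩ b (by simp [hival])
        (by rw [hb, ha, hroot]; simp [hival])
      exact (hadj.symm.reachable).trans hreach
    · have hba : b = a := Fin.ext (by rw [hb, ha, rootF_succ, if_neg hk])
      rw [hba]

lemma reach_same_root {a b : Fin n}
    (h : rootF (PN n P) a.1 = rootF (PN n P) b.1) :
    (H n S P).Reachable (some a) (some b) := by
  have hr : rootF (PN n P) a.1 < n := by
    have := rootF_le (PN n P) a.1; have := a.2; omega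
  exact (reach_root n S P a.1 a ⟨rootF (PN n P) a.1, hr⟩ rfl rfl).trans
    (reach_root n S P b.1 b ⟨rootF (PN n P) a.1, hr⟩ rfl h).symm

lemma reach_spoked {j : Fin n}
    (h : rootF (PN n P) j.1 ∈ img (SN n S) (PN n P)) :
    (H n S P).Reachable none (some j) := by
  obtain ⟨k, hkSN, hk⟩ := Finset.mem_image.mp h
  obtain ⟨kf, hkfS, rfl⟩ := Finset.mem_image.mp hkSN
  exact ((adj_spoke n S P hkfS).reachable).trans (reach_same_root n S P hk)

lemma label_reach : ∀ a b : Option (Fin n),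
    labelF n S P a = labelF n S P b → (H n S P).Reachable a b := by
  have key : ∀ j : Fin n, labelF n S P (some j) = none →
      (H n S P).Reachable none (some j) := by
    intro j hj
    by_cases hc : rootF (PN n P) j.1 ∈ img (SN n S) (PN n P)
    · exact reach_spoked n S P hc
    · simp [labelF, hc] at hj
  rintro (_ | i) (_ | j) h
  · exact SimpleGraph.Reachable.refl _
  · exact key j h.symm
  · exact (key i h).symm
  · by_cases hci : rootF (PN n P) i.1 ∈ img (SN n S) (PN n P) <;>
      by_cases hcj : rootF (PN n P) j.1 ∈ img (SN n S) (PN n P)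
    · exact ((key i (by simp [labelF, hci])).symm).trans (key j (by simp [labelF, hcj]))
    · simp [labelF, hci, hcj] at h
    · simp [labelF, hci, hcj] at h
    · simp only [labelF, if_neg hci, if_neg hcj, Option.some.injEq] at h
      exact reach_same_root n S P h

end FanCore
namespace FanCore
open FanEdges FanDP Finset

lemma image_label (n : ℕ) (S : Finset (Fin n)) (P : Finset (Fin (n-1))) :
    (Finset.univ.image (labelF n S P)) =
    insert none (((range n).filter
      (fun r => rootF (PN n P) r = r ∧ r ∉ img (SN n S) (PN n P))).image some) := by
  ext c
  simp only [Finset.mem_image, Finset.mem_univ, true_and, Finset.mem_insert,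
    Finset.mem_filter, Finset.mem_range]
  cases c with
  | none =>
    constructor
    · intro _; exact Or.inl rfl
    · intro _; exact ⟨none, rfl⟩
  | some r =>
    constructor
    · rintro ⟨v, hv⟩
      match v with
      | none => exact absurd hv (by simp [labelF])
      | some i =>
        by_cases hc : rootF (PN n P) i.1 ∈ img (SN n S) (PN n P)
        · simp [labelF, hc] at hv
        · simp only [labelF, if_neg hc, Option.some.injEq] at hv
          subst hv
          refine Or.inr ⟨rootF (PN n P) i.1, ⟨?_, rootF_idem _ _, hc⟩, rfl⟩
          have := rootF_le (PN n P) i.1; have := i.2; omega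
    · rintro (h | ⟨a, ⟨han, haroot, haimg⟩, ha⟩)
      · exact absurd h (by simp)
      · refine ⟨some ⟨a, han⟩, ?_⟩
        have hc : rootF (PN n P) a ∉ img (SN n S) (PN n P) := by rw [haroot]; exact haimg
        simp only [labelF, if_neg hc]
        rw [← ha, haroot]

lemma omega_eq (n : ℕ) (S : Finset (Fin n)) (P : Finset (Fin (n-1))) :
    (fanGraph n).toMultigraph.omega (eset n S P) = 1 + mtot n (SN n S) (PN n P) := by
  have hrfl : (fanGraph n).toMultigraph.omega (eset n S P)
      = Nat.card (H n S P).ConnectedComponent := rfl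
  rw [hrfl, card_cc _ (labelF n S P) (fun a b h => label_adj n S P h) (label_reach n S P)]
  rw [image_label, Finset.card_insert_of_notMem (by simp),
    Finset.card_image_of_injective _ (Option.some_injective ℕ)]
  rw [mtot]
  omega

lemma card_eset (n : ℕ) (S : Finset (Fin n)) (P : Finset (Fin (n-1))) :
    (eset n S P).card = S.card + P.card := by
  rw [eset, Finset.card_map, Finset.card_disjSum]

lemma SN_sub (n : ℕ) (S : Finset (Fin n)) : SN n S ⊆ range n := by
  intro r hr
  obtain ⟨i, -, rfl⟩ := Finset.mem_image.mp hr
  exact Finset.mem_range.mpr i.2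

lemma PN_sub (n : ℕ) (P : Finset (Fin (n-1))) : PN n P ⊆ range (n-1) := by
  intro r hr
  obtain ⟨i, -, rfl⟩ := Finset.mem_image.mp hr
  exact Finset.mem_range.mpr i.2

lemma SN_card (n : ℕ) (S : Finset (Fin n)) : (SN n S).card = S.card :=
  Finset.card_image_of_injective _ Fin.val_injective

lemma PN_card (n : ℕ) (P : Finset (Fin (n-1))) : (PN n P).card = P.card :=
  Finset.card_image_of_injective _ Fin.val_injective

lemma SN_univ (n : ℕ) : SN n Finset.univ = range n := by
  ext r
  simp only [SN, Finset.mem_image, Finset.mem_univ, true_and, Finset.mem_range]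
  constructor
  · rintro ⟨i, rfl⟩; exact i.2
  · intro hr; exact ⟨⟨r, hr⟩, rfl⟩

lemma eset_univ (n : ℕ) : eset n Finset.univ Finset.univ = Finset.univ := by
  rw [eset, Finset.univ_disjSum_univ, Finset.map_univ_equiv]

lemma mtot_univ (n : ℕ) : mtot n (SN n (Finset.univ : Finset (Fin n)))
    (PN n (Finset.univ : Finset (Fin (n-1)))) = 0 := by
  rw [mtot, Finset.card_eq_zero, Finset.filter_eq_empty_iff]
  rintro r hr ⟨hroot, himg⟩
  apply himg
  exact Finset.mem_image.mpr ⟨r, by rw [SN_univ]; exact hr, hroot⟩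

lemma mtot_le (n : ℕ) (S P : Finset ℕ) : mtot n S P ≤ n := by
  rw [mtot]
  calc ((range n).filter _).card ≤ (range n).card := Finset.card_filter_le _ _
    _ = n := Finset.card_range n

lemma rk_eset (n : ℕ) (S : Finset (Fin n)) (P : Finset (Fin (n-1))) :
    (fanGraph n).toMultigraph.rk (eset n S P) = n - mtot n (SN n S) (PN n P) := by
  rw [Multigraph.rk, omega_eq]
  have hcard : Fintype.card ((fanGraph n).toMultigraph.V) = n + 1 := by
    simp [SimpleGraph.toMultigraph]
    exact (Fintype.card_option (α := Fin n)).trans (by rw [Fintype.card_fin])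
  rw [hcard]
  have := mtot_le n (SN n S) (PN n P)
  omega

lemma rk_univ (n : ℕ) : (fanGraph n).toMultigraph.rk Finset.univ = n := by
  rw [← eset_univ, rk_eset, mtot_univ]
  omega

end FanCore
namespace FanDP
open Finset

lemma mtot_card_ineq (n : ℕ) {S P : Finset ℕ} (hS : S ⊆ range n) (hP : P ⊆ range (n-1)) :
    n ≤ S.card + P.card + mtot n S P := by
  classical
  have himgR : img S P ⊆ (range n).filter (fun r => rootF P r = r) := by
    intro r hr
    obtain ⟨k, hk, rfl⟩ := Finset.mem_image.mp hr
    have hkn := Finset.mem_range.mp (hS hk)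
    exact Finset.mem_filter.mpr ⟨Finset.mem_range.mpr
      (by have := rootF_le P k; omega), rootF_idem P k⟩
  have hmtot : mtot n S P + (img S P).card
      = ((range n).filter (fun r => rootF P r = r)).card := by
    have h1 : (range n).filter (fun r => rootF P r = r ∧ r ∉ img S P)
        = ((range n).filter (fun r => rootF P r = r)) \ img S P := by
      rw [Finset.sdiff_eq_filter, Finset.filter_filter]
    rw [mtot, h1, Finset.card_sdiff_add_card_eq_card himgR]
  have hsucc : P.image (fun p => p + 1) ⊆ range n := by
    intro r hr
    obtain ⟨p, hp, rfl⟩ := Finset.mem_image.mp hr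
    have := Finset.mem_range.mp (hP hp)
    exact Finset.mem_range.mpr (by omega)
  have hRcard : ((range n).filter (fun r => rootF P r = r)).card
      + (P.image (fun p => p + 1)).card = n := by
    have h2 : (range n).filter (fun r => rootF P r = r)
        = range n \ (P.image (fun p => p + 1)) := by
      ext r
      simp only [Finset.mem_filter, Finset.mem_sdiff, Finset.mem_range, Finset.mem_image]
      constructor
      · rintro ⟨hrn, hroot⟩
        refine ⟨hrn, ?_⟩
        rintro ⟨p, hp, rfl⟩
        exact ((rootF_succ_eq_iff P p).mp hroot) hp
      · rintro ⟨hrn, hnot⟩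
        refine ⟨hrn, ?_⟩
        cases r with
        | zero => rfl
        | succ p => exact (rootF_succ_eq_iff P p).mpr (fun hp => hnot ⟨p, hp, rfl⟩)
    rw [h2, Finset.card_sdiff_add_card_eq_card hsucc, Finset.card_range]
  have himgcard : (img S P).card ≤ S.card := Finset.card_image_le
  have hPcard : (P.image (fun p => p + 1)).card = P.card :=
    Finset.card_image_of_injective _ (fun a b h => by omega)
  omega

lemma per_term2 (n : ℕ) (hn : 1 ≤ n) (S P : Finset ℕ) (c : ℕ) :
    (xZ - 1) ^ (mtot n S P) * (yZ - 1) ^ (c + mtot n S P + 1)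
    = (yZ - 1) * ((if lsp n S P then uu ^ mexc n S P * (yZ - 1) ^ c else 0)
      + uu * (if lsp n S P then 0 else uu ^ mexc n S P * (yZ - 1) ^ c)) := by
  rw [mtot_eq_mexc n hn S P]
  by_cases h : lsp n S P
  · rw [if_pos h, if_pos h, if_pos h, uu, mul_pow]
    ring
  · rw [if_neg h, if_neg h, if_neg h, uu, mul_pow]
    ring

end FanDP

namespace FanCore
open FanEdges FanDP Finset

noncomputable def pairEquiv (α β : Type*) : Finset α × Finset β ≃ Finset (α ⊕ β) where
  toFun p := p.1.disjSum p.2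
  invFun A := (A.toLeft, A.toRight)
  left_inv p := by simp
  right_inv A := by simp [Finset.toLeft_disjSum_toRight]

lemma sum_fin_powerset {M : Type*} [AddCommMonoid M] (n : ℕ) (f : Finset ℕ → M) :
    (∑ S : Finset (Fin n), f (S.image Fin.val)) = ∑ T ∈ (range n).powerset, f T := by
  apply Finset.sum_nbij' (i := fun S => S.image Fin.val)
    (j := fun T => T.preimage Fin.val Fin.val_injective.injOn)
  · intro S _
    refine Finset.mem_powerset.mpr ?_
    intro r hr
    obtain ⟨i, -, rfl⟩ := Finset.mem_image.mp hr
    exact Finset.mem_range.mpr i.2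
  · intro T _
    exact Finset.mem_univ _
  · intro S _
    ext i
    simp [Finset.mem_preimage, Fin.val_injective.eq_iff]
  · intro T hT
    ext r
    simp only [Finset.mem_image, Finset.mem_preimage]
    constructor
    · rintro ⟨i, hi, rfl⟩; exact hi
    · intro hr
      have hrn : r < n := Finset.mem_range.mp (Finset.mem_powerset.mp hT hr)
      exact ⟨⟨r, hrn⟩, hr, rfl⟩
  · intro S _
    rfl

lemma tutte_key (n : ℕ) (hn : 1 ≤ n) :
    (yZ - 1)^(n+1) * (fanGraph n).toMultigraph.tutte xZ yZ
    = (yZ - 1) * (SA n + uu * SB n) := by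
  rw [Multigraph.tutte, Finset.mul_sum]
  rw [← Fintype.sum_equiv ((pairEquiv (Fin n) (Fin (n-1))).trans
      (Equiv.finsetCongr (edgeEquiv n)))
    (fun p => (yZ-1)^(n+1) * ((xZ - 1) ^ ((fanGraph n).toMultigraph.rk Finset.univ
          - (fanGraph n).toMultigraph.rk (eset n p.1 p.2))
        * (yZ - 1) ^ ((eset n p.1 p.2).card - (fanGraph n).toMultigraph.rk (eset n p.1 p.2))))
    _ (fun p => rfl)]
  rw [Fintype.sum_prod_type]
  have hterm : ∀ (S : Finset (Fin n)) (Pp : Finset (Fin (n-1))),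
      (yZ-1)^(n+1) * ((xZ - 1) ^ ((fanGraph n).toMultigraph.rk Finset.univ
          - (fanGraph n).toMultigraph.rk (eset n S Pp))
        * (yZ - 1) ^ ((eset n S Pp).card - (fanGraph n).toMultigraph.rk (eset n S Pp)))
      = (yZ - 1) * (termA n (SN n S) (PN n Pp) + uu * termB n (SN n S) (PN n Pp)) := by
    intro S Pp
    rw [rk_univ, rk_eset, card_eset]
    have h1 := mtot_le n (SN n S) (PN n Pp)
    have h2 := mtot_card_ineq n (SN_sub n S) (PN_sub n Pp)
    rw [SN_card, PN_card] at h2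
    rw [show n - (n - mtot n (SN n S) (PN n Pp)) = mtot n (SN n S) (PN n Pp) from by omega]
    rw [show S.card + Pp.card - (n - mtot n (SN n S) (PN n Pp))
      = S.card + Pp.card + mtot n (SN n S) (PN n Pp) - n from by omega]
    have hstep : (yZ-1)^(n+1) * ((xZ-1) ^ (mtot n (SN n S) (PN n Pp))
        * (yZ-1) ^ (S.card + Pp.card + mtot n (SN n S) (PN n Pp) - n))
        = (xZ-1) ^ (mtot n (SN n S) (PN n Pp))
          * (yZ-1) ^ (S.card + Pp.card + mtot n (SN n S) (PN n Pp) + 1) := by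
      rw [mul_comm ((xZ-1) ^ _) ((yZ-1) ^ _), ← mul_assoc, ← pow_add,
        show n+1 + (S.card + Pp.card + mtot n (SN n S) (PN n Pp) - n)
          = S.card + Pp.card + mtot n (SN n S) (PN n Pp) + 1 from by omega]
      ring
    rw [hstep, per_term2 n hn (SN n S) (PN n Pp) (S.card + Pp.card)]
    rw [termA, termB, SN_card, PN_card]
  calc (∑ S : Finset (Fin n), ∑ Pp : Finset (Fin (n-1)),
        (yZ-1)^(n+1) * ((xZ - 1) ^ ((fanGraph n).toMultigraph.rk Finset.univ
          - (fanGraph n).toMultigraph.rk (eset n S Pp))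
        * (yZ - 1) ^ ((eset n S Pp).card - (fanGraph n).toMultigraph.rk (eset n S Pp))))
      = ∑ S : Finset (Fin n), ∑ Pp : Finset (Fin (n-1)),
          (yZ - 1) * (termA n (SN n S) (PN n Pp) + uu * termB n (SN n S) (PN n Pp)) := by
        apply Finset.sum_congr rfl
        intro S _
        apply Finset.sum_congr rfl
        intro Pp _
        exact hterm S Pp
    _ = ∑ T ∈ (range n).powerset, ∑ U ∈ (range (n-1)).powerset,
          (yZ - 1) * (termA n T U + uu * termB n T U) := by
        rw [← sum_fin_powerset n (fun T => ∑ U ∈ (range (n-1)).powerset,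
          (yZ - 1) * (termA n T U + uu * termB n T U))]
        apply Finset.sum_congr rfl
        intro S _
        rw [← sum_fin_powerset (n-1) (fun U =>
          (yZ - 1) * (termA n (Finset.image Fin.val S) U + uu * termB n (Finset.image Fin.val S) U))]
        simp only [SN, PN]
    _ = (yZ - 1) * (SA n + uu * SB n) := by
        rw [SA, SB]
        simp only [mul_add, Finset.mul_sum, Finset.sum_add_distrib]

end FanCore
/-- For every `n ≥ 1`, in `ℤ[x, y]`:
`T(F_n) = y(1−x) Σ_{j=0}^{⌊(n−2)/2⌋} C(n−j−2, j)(x+y+1)^(n−2j−2)(−xy)^j`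
`+ x Σ_{j=0}^{⌊(n−1)/2⌋} C(n−j−1, j)(x+y+1)^(n−2j−1)(−xy)^j`
(the first sum being empty when `n = 1`; note `⌊(n−2)/2⌋ + 1 = ⌊n/2⌋` for `n ≥ 2` and
`⌊(n−1)/2⌋ + 1 = ⌊(n+1)/2⌋` for `n ≥ 1`). -/
theorem fan_tutte_binomial_formula (n : ℕ) (hn : 1 ≤ n) :
    (fanGraph n).toMultigraph.tutte xZ yZ =
      yZ * (1 - xZ) *
        (∑ j ∈ Finset.range (n / 2),
          (Nat.choose (n - j - 2) j : Zxy) * (xZ + yZ + 1) ^ (n - 2 * j - 2) *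
            (-(xZ * yZ)) ^ j)
      + xZ *
        (∑ j ∈ Finset.range ((n + 1) / 2),
          (Nat.choose (n - j - 1) j : Zxy) * (xZ + yZ + 1) ^ (n - 2 * j - 1) *
            (-(xZ * yZ)) ^ j) := by
  obtain ⟨m, rfl⟩ : ∃ m, n = m + 1 := ⟨n - 1, by omega⟩
  have hy : (yZ - 1) ≠ 0 := by
    intro h
    have := congrArg (MvPolynomial.eval (fun _ => (0:ℤ))) h
    simp [yZ, MvPolynomial.eval_X] at this
  have hkey := FanCore.tutte_key (m+1) (by omega)
  obtain ⟨hA, hB⟩ := FanDP.SA_SB_closed m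
  rw [hA, hB] at hkey
  have hcancel : (fanGraph (m+1)).toMultigraph.tutte xZ yZ
      = xZ * FanDP.Cc (m+1) + yZ * (1 - xZ) * FanDP.Cc m := by
    apply mul_left_cancel₀ (pow_ne_zero (m+1+1) hy)
    rw [hkey, FanDP.uu]
    ring
  rw [hcancel]
  have h2 : FanDP.Cc (m+1) = ∑ j ∈ Finset.range ((m+1+1)/2),
      (Nat.choose (m+1-j-1) j : Zxy) * (xZ + yZ + 1)^(m+1-2*j-1) * (-(xZ*yZ))^j := by
    rw [FanDP.Cc_bin' m]
    apply Finset.sum_congr rfl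
    intro j hj
    rw [FanDP.cbin, show m+1-j-1 = m-j from by omega, show m+1-2*j-1 = m-2*j from by omega]
  have h1 : FanDP.Cc m = ∑ j ∈ Finset.range ((m+1)/2),
      (Nat.choose (m+1-j-2) j : Zxy) * (xZ + yZ + 1)^(m+1-2*j-2) * (-(xZ*yZ))^j := by
    cases m with
    | zero => simp [FanDP.Cc_zero]
    | succ k =>
      rw [FanDP.Cc_bin' k]
      apply Finset.sum_congr rfl
      intro j hj
      rw [FanDP.cbin, show k+1+1-j-2 = k-j from by omega,
        show k+1+1-2*j-2 = k-2*j from by omega]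
  rw [h1, h2]
  ring
end
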